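/- Let n ≥ 2 and let λ₁,…,λₙ > 1. For φ ∈ (0, π/2] define the chain x_j(φ) = (λ₁⋯λ_j)·e^{iφ} ∈ ℍ² for 0 ≤ j ≤ n (so x₀(φ) = e^{iφ}). Then the function φ ↦ τ(x₀(φ),…,xₙ(φ)) is non-increasing on (0, π/2]: if 0 < φ ≤ φ' ≤ π/2 then τ(x₀(φ'),…,xₙ(φ')) ≤ τ(x₀(φ),…,xₙ(φ)). -/

import Mathlib

open UpperHalfPlane Real Filter

/-- The tension of the chain `x 0, x 1, …, x n`:
`τ = Σ_{j=1}^{n−1} d(x_{j−1},x_{j+1}) − Σ_{j=2}^{n−1} d(x_{j−1},x_j) − d(x_0,x_n)`. -/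
noncomputable def tension (n : ℕ) (x : ℕ → UpperHalfPlane) : ℝ :=
  (∑ j ∈ Finset.range (n - 1), dist (x j) (x (j + 2)))
    - (∑ j ∈ Finset.range (n - 2), dist (x (j + 1)) (x (j + 2)))
    - dist (x 0) (x n)

/-- The Gromov product `⟨x,y⟩_z = (d(x,z)+d(z,y)−d(x,y))/2`. -/
noncomputable def gromov (x y z : UpperHalfPlane) : ℝ :=
  (dist x z + dist z y - dist x y) / 2

/-- A pair `(a,b)` is good if `a, b ≥ 0` and `sinh(a−b) > 2·sinh(a/2)`. -/
def GoodPair (a b : ℝ) : Prop :=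
  0 ≤ a ∧ 0 ≤ b ∧ Real.sinh (a - b) > 2 * Real.sinh (a / 2)

/-- The chain `x 0, …, x n` is `(a,b)`-good. -/
def GoodChain (a b : ℝ) (n : ℕ) (x : ℕ → UpperHalfPlane) : Prop :=
  (∀ j < n, dist (x (j + 1)) (x j) ≥ a) ∧
  (∀ j, 1 ≤ j → j + 1 ≤ n → gromov (x (j - 1)) (x (j + 1)) (x j) ≤ b)

/-! ### Auxiliary lemmas -/

/-- `ρ s ℓ = 2 sinh(ℓ/2)/√(1+s² sinh(ℓ/2)²)`, the derivative in `s` of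
`2 arsinh(s sinh(ℓ/2))`. -/
noncomputable def rho (s l : ℝ) : ℝ :=
  2 * Real.sinh (l/2) / Real.sqrt (1 + s^2 * Real.sinh (l/2)^2)

/-- The derivative of `ρ s ·`. -/
noncomputable def rhoD (s l : ℝ) : ℝ :=
  Real.cosh (l/2) / ((1 + s^2 * Real.sinh (l/2)^2) * Real.sqrt (1 + s^2 * Real.sinh (l/2)^2))

lemma hasDerivAt_rho (s l : ℝ) : HasDerivAt (rho s) (rhoD s l) l := by
  have hv : HasDerivAt (fun t : ℝ => Real.sinh (t/2)) (Real.cosh (l/2) * (1/2)) l := by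
    exact (Real.hasDerivAt_sinh (l/2)).comp l ((hasDerivAt_id l).div_const 2)
  have hE : HasDerivAt (fun t : ℝ => 1 + s^2 * Real.sinh (t/2)^2)
      (s^2 * (2 * Real.sinh (l/2) * (Real.cosh (l/2) * (1/2)))) l := by
    have := ((hv.pow 2).const_mul (s^2)).const_add 1
    refine this.congr_deriv ?_
    ring
  have hEpos : 0 < 1 + s^2 * Real.sinh (l/2)^2 := by positivity
  have hsqrtpos : 0 < Real.sqrt (1 + s^2 * Real.sinh (l/2)^2) := Real.sqrt_pos.mpr hEpos
  have hD := hE.sqrt hEpos.ne'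
  have hN : HasDerivAt (fun t : ℝ => 2 * Real.sinh (t/2)) (2 * (Real.cosh (l/2) * (1/2))) l :=
    hv.const_mul 2
  have h := hN.div hD hsqrtpos.ne'
  refine h.congr_deriv ?_
  rw [rhoD]
  have hsq : Real.sqrt (1 + s^2 * Real.sinh (l/2)^2) ^ 2 = 1 + s^2 * Real.sinh (l/2)^2 :=
    Real.sq_sqrt hEpos.le
  rw [hsq]
  field_simp
  linear_combination hsq

lemma key_poly (a u v : ℝ) (ha : 1 ≤ a) (hu : 0 ≤ u) (huv : u ≤ v) :
    (1+v)*(1+a*u)^3 ≤ (1+u)*(1+a*v)^3 := by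
  have ha0 : (0:ℝ) ≤ a := by linarith
  have hv : 0 ≤ v := hu.trans huv
  have hd : 0 ≤ v - u := sub_nonneg.2 huv
  have hT1 : 0 ≤ (v-u)*(1+a*u)^2*(3*a-1+2*a*u) := by
    apply mul_nonneg (mul_nonneg hd (sq_nonneg _))
    nlinarith [mul_nonneg ha0 hu]
  have hT2 : 0 ≤ (a*(v-u)*(1+u))*(a*(v-u)*(3+a*v+2*a*u)) := by
    apply mul_nonneg
    · apply mul_nonneg (mul_nonneg ha0 hd); linarith
    · apply mul_nonneg (mul_nonneg ha0 hd)
      nlinarith [mul_nonneg ha0 hu, mul_nonneg ha0 hv]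
  nlinarith [hT1, hT2]

lemma rhoD_anti (s : ℝ) (hs : 1 ≤ s) {u v : ℝ} (hu : 0 ≤ u) (huv : u ≤ v) :
    rhoD s v ≤ rhoD s u := by
  rw [rhoD, rhoD]
  set pu := Real.sinh (u/2)^2 with hpu
  set pv := Real.sinh (v/2)^2 with hpv
  have hs2 : 1 ≤ s^2 := by nlinarith
  have hpuv : pu ≤ pv := by
    rw [hpu, hpv]
    have h1 : Real.sinh (u/2) ≤ Real.sinh (v/2) := Real.sinh_le_sinh.mpr (by linarith)
    have h2 : 0 ≤ Real.sinh (u/2) := by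
      rw [← Real.sinh_zero]; exact Real.sinh_le_sinh.mpr (by linarith)
    nlinarith
  have hpu0 : 0 ≤ pu := sq_nonneg _
  have hEu : (0:ℝ) < 1 + s^2 * pu := by nlinarith
  have hEv : (0:ℝ) < 1 + s^2 * pv := by nlinarith
  have hRu := Real.sqrt_pos.mpr hEu
  have hRv := Real.sqrt_pos.mpr hEv
  have hcu : 0 < Real.cosh (u/2) := Real.cosh_pos _
  have hcv : 0 < Real.cosh (v/2) := Real.cosh_pos _
  rw [div_le_div_iff₀ (by positivity) (by positivity)]
  have hL : 0 ≤ Real.cosh (v/2) * ((1 + s^2*pu) * Real.sqrt (1 + s^2*pu)) := by positivity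
  have hsq : (Real.cosh (v/2) * ((1 + s^2*pu) * Real.sqrt (1 + s^2*pu)))^2
      ≤ (Real.cosh (u/2) * ((1 + s^2*pv) * Real.sqrt (1 + s^2*pv)))^2 := by
    have e1 : (Real.cosh (v/2))^2 = 1 + pv := by
      rw [hpv, Real.cosh_sq']
    have e2 : (Real.cosh (u/2))^2 = 1 + pu := by
      rw [hpu, Real.cosh_sq']
    have e3 : (Real.sqrt (1 + s^2*pu))^2 = 1 + s^2*pu := Real.sq_sqrt hEu.le
    have e4 : (Real.sqrt (1 + s^2*pv))^2 = 1 + s^2*pv := Real.sq_sqrt hEv.le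
    have key := key_poly (s^2) pu pv hs2 hpu0 hpuv
    calc (Real.cosh (v/2) * ((1 + s^2*pu) * Real.sqrt (1 + s^2*pu)))^2
        = (1+pv)*(1+s^2*pu)^3 := by
          rw [mul_pow, mul_pow, e1, e3]; ring
      _ ≤ (1+pu)*(1+s^2*pv)^3 := key
      _ = (Real.cosh (u/2) * ((1 + s^2*pv) * Real.sqrt (1 + s^2*pv)))^2 := by
          rw [mul_pow, mul_pow, e2, e4]; ring
  calc Real.cosh (v/2) * ((1 + s^2*pu) * Real.sqrt (1 + s^2*pu))
      = Real.sqrt ((Real.cosh (v/2) * ((1 + s^2*pu) * Real.sqrt (1 + s^2*pu)))^2) :=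
        (Real.sqrt_sq hL).symm
    _ ≤ Real.sqrt ((Real.cosh (u/2) * ((1 + s^2*pv) * Real.sqrt (1 + s^2*pv)))^2) :=
        Real.sqrt_le_sqrt hsq
    _ = Real.cosh (u/2) * ((1 + s^2*pv) * Real.sqrt (1 + s^2*pv)) :=
        Real.sqrt_sq (by positivity)

lemma rho_incr (s : ℝ) (hs : 1 ≤ s) {x y y' : ℝ} (hx : 0 ≤ x) (hy : 0 ≤ y) (hyy : y ≤ y') :
    rho s (x + y') - rho s y' ≤ rho s (x + y) - rho s y := by
  have hG : ∀ t : ℝ, HasDerivAt (fun z => rho s (x + z) - rho s z) (rhoD s (x + t) - rhoD s t) t := by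
    intro t
    have h1 : HasDerivAt (fun z : ℝ => rho s (x + z)) (rhoD s (x + t)) t := by
      have := (hasDerivAt_rho s (x + t)).comp t ((hasDerivAt_id t).const_add x)
      exact this.congr_deriv (mul_one _)
    exact h1.sub (hasDerivAt_rho s t)
  have hanti : AntitoneOn (fun z => rho s (x + z) - rho s z) (Set.Ici 0) := by
    apply antitoneOn_of_deriv_nonpos (convex_Ici 0)
    · exact Continuous.continuousOn (by
        have : ∀ t, DifferentiableAt ℝ (fun z => rho s (x + z) - rho s z) t :=
          fun t => (hG t).differentiableAt
        exact Differentiable.continuous (fun t => this t))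
    · intro t _
      exact (hG t).differentiableAt.differentiableWithinAt
    · intro t ht
      rw [(hG t).deriv]
      have ht' : (0:ℝ) ≤ t := le_of_lt (by simpa using ht)
      have := rhoD_anti s hs ht' (by linarith : t ≤ x + t)
      linarith
  exact hanti (Set.mem_Ici.2 hy) (Set.mem_Ici.2 (hy.trans hyy)) hyy

lemma L_mono {L : ℕ → ℝ} {n : ℕ} (hL : ∀ j < n, L j ≤ L (j+1)) :
    ∀ i j, i ≤ j → j ≤ n → L i ≤ L j := by
  intro i j hij hjn
  induction j with
  | zero => simp_all
  | succ k ih =>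
    rcases Nat.lt_or_ge i (k+1) with h | h
    · have : L i ≤ L k := ih (by omega) (by omega)
      exact this.trans (hL k (by omega))
    · have : i = k + 1 := by omega
      simp [this]

lemma pos_comb (s : ℝ) (hs : 1 ≤ s) (n : ℕ) (hn : 2 ≤ n) (L : ℕ → ℝ)
    (hL : ∀ j < n, L j ≤ L (j+1)) :
    (∑ j ∈ Finset.range (n-2), rho s (L (j+2) - L (j+1))) + rho s (L n - L 0)
      ≤ ∑ j ∈ Finset.range (n-1), rho s (L (j+2) - L j) := by
  induction n, hn using Nat.le_induction with
  | base => simp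
  | succ n hn ih =>
    have hL' : ∀ j < n, L j ≤ L (j+1) := fun j hj => hL j (by omega)
    have ih' := ih hL'
    have e1 : n + 1 - 1 = (n-1) + 1 := by omega
    have e2 : n + 1 - 2 = (n-2) + 1 := by omega
    rw [e1, e2, Finset.sum_range_succ, Finset.sum_range_succ]
    have e3 : (n-2) + 1 = n - 1 := by omega
    have e4 : (n-1) + 1 = n := by omega
    have e5 : (n-2) + 2 = n := by omega
    have e6 : (n-1) + 2 = n + 1 := by omega
    rw [e3, e5, e6]
    have hmono := L_mono hL
    have hx : 0 ≤ L (n+1) - L n := by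
      have := hL n (by omega); linarith
    have hy : 0 ≤ L n - L (n-1) := by
      have := hmono (n-1) n (by omega) (by omega); linarith
    have hyy : L n - L (n-1) ≤ L n - L 0 := by
      have := hmono 0 (n-1) (by omega) (by omega); linarith
    have key := rho_incr s hs hx hy hyy
    have ee1 : L (n+1) - L n + (L n - L (n-1)) = L (n+1) - L (n-1) := by ring
    have ee2 : L (n+1) - L n + (L n - L 0) = L (n+1) - L 0 := by ring
    rw [ee1, ee2] at key
    linarith

lemma hasDerivAt_term (l s : ℝ) :
    HasDerivAt (fun t : ℝ => 2 * Real.arsinh (Real.sinh (l/2) * t)) (rho s l) s := by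
  have h := (Real.hasDerivAt_arsinh (Real.sinh (l/2) * s)).comp s
    ((hasDerivAt_id s).const_mul (Real.sinh (l/2)))
  have h2 := h.const_mul 2
  refine h2.congr_deriv ?_
  rw [rho, show 1 + s^2 * Real.sinh (l/2)^2 = 1 + (Real.sinh (l/2) * s)^2 by ring]
  have : (0:ℝ) < Real.sqrt (1 + (Real.sinh (l/2) * s)^2) := Real.sqrt_pos.mpr (by positivity)
  field_simp

lemma F_mono (n : ℕ) (hn : 2 ≤ n) (L : ℕ → ℝ) (hL : ∀ j < n, L j ≤ L (j+1)) :
    MonotoneOn (fun s : ℝ =>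
      (∑ j ∈ Finset.range (n-1), 2 * Real.arsinh (Real.sinh ((L (j+2) - L j)/2) * s))
      - (∑ j ∈ Finset.range (n-2), 2 * Real.arsinh (Real.sinh ((L (j+2) - L (j+1))/2) * s))
      - 2 * Real.arsinh (Real.sinh ((L n - L 0)/2) * s)) (Set.Ici 1) := by
  have hF : ∀ s : ℝ, HasDerivAt (fun s : ℝ =>
      (∑ j ∈ Finset.range (n-1), 2 * Real.arsinh (Real.sinh ((L (j+2) - L j)/2) * s))
      - (∑ j ∈ Finset.range (n-2), 2 * Real.arsinh (Real.sinh ((L (j+2) - L (j+1))/2) * s))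
      - 2 * Real.arsinh (Real.sinh ((L n - L 0)/2) * s))
      ((∑ j ∈ Finset.range (n-1), rho s (L (j+2) - L j))
        - (∑ j ∈ Finset.range (n-2), rho s (L (j+2) - L (j+1)))
        - rho s (L n - L 0)) s := by
    intro s
    have h1 : HasDerivAt (fun s : ℝ =>
        ∑ j ∈ Finset.range (n-1), 2 * Real.arsinh (Real.sinh ((L (j+2) - L j)/2) * s))
        (∑ j ∈ Finset.range (n-1), rho s (L (j+2) - L j)) s :=
      HasDerivAt.fun_sum (fun j _ => hasDerivAt_term (L (j+2) - L j) s)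
    have h2 : HasDerivAt (fun s : ℝ =>
        ∑ j ∈ Finset.range (n-2), 2 * Real.arsinh (Real.sinh ((L (j+2) - L (j+1))/2) * s))
        (∑ j ∈ Finset.range (n-2), rho s (L (j+2) - L (j+1))) s :=
      HasDerivAt.fun_sum (fun j _ => hasDerivAt_term (L (j+2) - L (j+1)) s)
    exact (h1.sub h2).sub (hasDerivAt_term (L n - L 0) s)
  apply monotoneOn_of_deriv_nonneg (convex_Ici 1)
  · exact Continuous.continuousOn
      (Differentiable.continuous (fun s => (hF s).differentiableAt))
  · exact fun s _ => (hF s).differentiableAt.differentiableWithinAt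
  · intro s hs
    rw [(hF s).deriv]
    have hs1 : 1 ≤ s := le_of_lt (by simpa using hs)
    have := pos_comb s hs1 n hn L hL
    linarith

lemma sinh_log_half (p q : ℝ) (hp : 0 < p) (hq : 0 < q) :
    Real.sinh ((Real.log q - Real.log p)/2) = (q - p) / (2 * Real.sqrt (p*q)) := by
  have hsp := Real.sqrt_pos.mpr hp
  have hsq := Real.sqrt_pos.mpr hq
  have ep : Real.exp (Real.log p / 2) = Real.sqrt p := by
    rw [← Real.log_sqrt hp.le, Real.exp_log hsp]
  have eq' : Real.exp (Real.log q / 2) = Real.sqrt q := by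
    rw [← Real.log_sqrt hq.le, Real.exp_log hsq]
  have h1 : (Real.log q - Real.log p)/2 = Real.log q / 2 - Real.log p / 2 := by ring
  rw [Real.sinh_eq, Real.sqrt_mul hp.le, h1, neg_sub, Real.exp_sub, Real.exp_sub, ep, eq']
  have hpp : Real.sqrt p * Real.sqrt p = p := Real.mul_self_sqrt hp.le
  have hq2 : Real.sqrt q * Real.sqrt q = q := Real.mul_self_sqrt hq.le
  field_simp
  rw [sq, sq, hpp, hq2]

lemma dist_formula (z w : UpperHalfPlane) (φ p q : ℝ) (hφ1 : 0 < φ) (hφ2 : φ ≤ π/2)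
    (hp : 0 < p) (hpq : p ≤ q)
    (hz : (z:ℂ) = (p:ℝ) * Complex.exp (φ * Complex.I))
    (hw : (w:ℂ) = (q:ℝ) * Complex.exp (φ * Complex.I)) :
    dist z w = 2 * Real.arsinh (Real.sinh ((Real.log q - Real.log p)/2) * (1 / Real.sin φ)) := by
  have hq : 0 < q := hp.trans_le hpq
  have hπ := Real.pi_pos
  have hsin : 0 < Real.sin φ := Real.sin_pos_of_pos_of_lt_pi hφ1 (by linarith)
  have him_z : z.im = p * Real.sin φ := by
    rw [← UpperHalfPlane.coe_im, hz]
    simp [Complex.exp_mul_I, Complex.mul_im, Complex.add_im, Complex.cos_ofReal_im,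
      Complex.sin_ofReal_re]
  have him_w : w.im = q * Real.sin φ := by
    rw [← UpperHalfPlane.coe_im, hw]
    simp [Complex.exp_mul_I, Complex.mul_im, Complex.add_im, Complex.cos_ofReal_im,
      Complex.sin_ofReal_re]
  have habs : dist (z:ℂ) (w:ℂ) = q - p := by
    rw [Complex.dist_eq, hz, hw, ← sub_mul, norm_mul, Complex.norm_exp_ofReal_mul_I, mul_one,
      ← Complex.ofReal_sub, Complex.norm_real, Real.norm_eq_abs, abs_of_nonpos (by linarith), neg_sub]
  have hsqrt : Real.sqrt (z.im * w.im) = Real.sqrt (p*q) * Real.sin φ := by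
    rw [him_z, him_w, show p * Real.sin φ * (q * Real.sin φ) = (p*q) * Real.sin φ^2 by ring,
      Real.sqrt_mul (by positivity), Real.sqrt_sq hsin.le]
  rw [UpperHalfPlane.dist_eq, habs, hsqrt, sinh_log_half p q hp hq]
  congr 1
  have hspq : 0 < Real.sqrt (p*q) := Real.sqrt_pos.mpr (by positivity)
  field_simp

/-- The tension of the chain `x_j(φ) = (λ₁⋯λ_j)·e^{iφ}` is non-increasing in `φ` on
`(0, π/2]`. -/
theorem tension_antitone_in_angle (n : ℕ) (hn : 2 ≤ n) (lam : ℕ → ℝ)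
    (hlam : ∀ j, 1 ≤ j → j ≤ n → 1 < lam j)
    (x : ℝ → ℕ → UpperHalfPlane)
    (hx : ∀ φ : ℝ, 0 < φ → φ ≤ π / 2 → ∀ j ≤ n,
      ((x φ j : ℂ)) = ((∏ i ∈ Finset.Icc 1 j, lam i : ℝ) : ℂ) * Complex.exp (φ * Complex.I))
    (φ φ' : ℝ) (h1 : 0 < φ) (h2 : φ ≤ φ') (h3 : φ' ≤ π / 2) :
    tension n (x φ') ≤ tension n (x φ) := by
  have hπ := Real.pi_pos
  have h1' : 0 < φ' := h1.trans_le h2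
  have h3' : φ ≤ π / 2 := h2.trans h3
  have hsinφ : 0 < Real.sin φ := Real.sin_pos_of_pos_of_lt_pi h1 (by linarith)
  have hsinφ' : 0 < Real.sin φ' := Real.sin_pos_of_pos_of_lt_pi h1' (by linarith)
  have hsinle : Real.sin φ ≤ Real.sin φ' := by
    apply Real.strictMonoOn_sin.monotoneOn _ _ h2
    · constructor <;> [linarith; linarith]
    · constructor <;> [linarith; linarith]
  -- the products
  set t : ℕ → ℝ := fun j => ∏ i ∈ Finset.Icc 1 j, lam i with ht
  have htpos : ∀ j ≤ n, 0 < t j := by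
    intro j hj
    apply Finset.prod_pos
    intro i hi
    rw [Finset.mem_Icc] at hi
    exact lt_trans one_pos (hlam i hi.1 (hi.2.trans hj))
  have htstep : ∀ j, j + 1 ≤ n → t j ≤ t (j+1) := by
    intro j hj
    have : t (j+1) = t j * lam (j+1) := Finset.prod_Icc_succ_top (by omega) _
    rw [this]
    have h1l : 1 < lam (j+1) := hlam (j+1) (by omega) hj
    nlinarith [htpos j (by omega)]
  have htmono : ∀ i j, i ≤ j → j ≤ n → t i ≤ t j := by
    intro i j hij hjn
    induction j with
    | zero => simp_all
    | succ k ih =>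
      rcases Nat.lt_or_ge i (k+1) with h | h
      · exact (ih (by omega) (by omega)).trans (htstep k hjn)
      · have : i = k + 1 := by omega
        simp [this]
  set L : ℕ → ℝ := fun j => Real.log (t j) with hLdef
  have hL : ∀ j < n, L j ≤ L (j+1) := by
    intro j hj
    exact Real.log_le_log (htpos j (by omega)) (htstep j (by omega))
  -- rewrite tension as F (1 / sin ψ)
  have hT : ∀ ψ : ℝ, 0 < ψ → ψ ≤ π / 2 → tension n (x ψ) =
      (∑ j ∈ Finset.range (n-1), 2 * Real.arsinh (Real.sinh ((L (j+2) - L j)/2) * (1 / Real.sin ψ)))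
      - (∑ j ∈ Finset.range (n-2), 2 * Real.arsinh (Real.sinh ((L (j+2) - L (j+1))/2) * (1 / Real.sin ψ)))
      - 2 * Real.arsinh (Real.sinh ((L n - L 0)/2) * (1 / Real.sin ψ)) := by
    intro ψ hψ1 hψ2
    have hdist : ∀ i j, i ≤ j → j ≤ n → dist (x ψ i) (x ψ j)
        = 2 * Real.arsinh (Real.sinh ((L j - L i)/2) * (1 / Real.sin ψ)) := by
      intro i j hij hjn
      exact dist_formula (x ψ i) (x ψ j) ψ (t i) (t j) hψ1 hψ2
        (htpos i (hij.trans hjn)) (htmono i j hij hjn)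
        (hx ψ hψ1 hψ2 i (hij.trans hjn)) (hx ψ hψ1 hψ2 j hjn)
    rw [tension]
    congr 1
    · congr 1
      · apply Finset.sum_congr rfl
        intro j hj
        rw [Finset.mem_range] at hj
        exact hdist j (j+2) (by omega) (by omega)
      · apply Finset.sum_congr rfl
        intro j hj
        rw [Finset.mem_range] at hj
        exact hdist (j+1) (j+2) (by omega) (by omega)
    · exact hdist 0 n (by omega) le_rfl
  rw [hT φ h1 h3', hT φ' h1' h3]
  have hmem : (1 / Real.sin φ') ∈ Set.Ici (1:ℝ) := by
    rw [Set.mem_Ici, le_div_iff₀ hsinφ', one_mul]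
    exact Real.sin_le_one φ'
  have hmem' : (1 / Real.sin φ) ∈ Set.Ici (1:ℝ) := by
    rw [Set.mem_Ici, le_div_iff₀ hsinφ, one_mul]
    exact (Real.sin_le_one φ).trans (le_refl 1)
  have hle : (1 / Real.sin φ') ≤ (1 / Real.sin φ) :=
    one_div_le_one_div_of_le hsinφ hsinle
  exact F_mono n hn L hL hmem hmem' hle
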